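/- arXiv:2403.17557 — 2 statements merged into one kernel-verified Lean document; each statement's English description precedes it below -/
import Mathlib

section
/- Let 0 ≤ m < M and let f : [0,∞) → ℝ be a superquadratic function, and let β(t) = ((t−m)/(M−m))·f(M−t) + ((M−t)/(M−m))·f(t−m). Then for all x, y ∈ [m,M] with x < y: f(m + M − (x+y)/2) + 2∫₀^{1/2} f(u·|x−y|) du ≤ (1/(y−x))·∫ₓ^y f(m + M − u) du ≤ f(m) + f(M) − (f(x)+f(y))/2 − (β(x)+β(y)) − 2∫₀¹ (1−u)·f(u·|x−y|) du. -/
/-- A function `f : [0,∞) → ℝ` is superquadratic if for every `x ≥ 0` there exists a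
constant `C ∈ ℝ` such that `f y ≥ f x + C * (y - x) + f |y - x|` for all `y ≥ 0`. -/
def Superquadratic (f : ℝ → ℝ) : Prop :=
  ∀ x : ℝ, 0 ≤ x → ∃ C : ℝ, ∀ y : ℝ, 0 ≤ y → f x + C * (y - x) + f (|y - x|) ≤ f y

open MeasureTheory

lemma sq_jensen (f : ℝ → ℝ) (hf : Superquadratic f) {a b l : ℝ}
    (ha : 0 ≤ a) (hb : 0 ≤ b) (hl0 : 0 ≤ l) (hl1 : l ≤ 1) :
    f (l*a + (1-l)*b) ≤ l * f a + (1-l) * f b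
      - l * f ((1-l)*|a-b|) - (1-l) * f (l*|a-b|) := by
  have hx0 : 0 ≤ l*a + (1-l)*b := by nlinarith
  obtain ⟨C, hC⟩ := hf _ hx0
  have h1 := hC a ha
  have h2 := hC b hb
  have e1 : |a - (l*a+(1-l)*b)| = (1-l)*|a-b| := by
    rw [show a - (l*a+(1-l)*b) = (1-l)*(a-b) by ring, abs_mul,
      abs_of_nonneg (by linarith : (0:ℝ) ≤ 1-l)]
  have e2 : |b - (l*a+(1-l)*b)| = l*|a-b| := by
    rw [show b - (l*a+(1-l)*b) = -(l*(a-b)) by ring, abs_neg, abs_mul, abs_of_nonneg hl0]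
  rw [e1] at h1; rw [e2] at h2
  have h1' := mul_le_mul_of_nonneg_left h1 hl0
  have h2' := mul_le_mul_of_nonneg_left h2 (by linarith : (0:ℝ) ≤ 1-l)
  nlinarith [h1', h2']

lemma mercer_pt (f : ℝ → ℝ) (hf : Superquadratic f) {m M t : ℝ}
    (hm : 0 ≤ m) (hmM : m < M) (ht : t ∈ Set.Icc m M) :
    f (m + M - t) ≤ f m + f M - f t
      - 2 * ((t - m) / (M - m) * f (M - t) + (M - t) / (M - m) * f (t - m)) := by
  obtain ⟨ht1, ht2⟩ := ht
  have hk : (0:ℝ) < M - m := by linarith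
  set μ : ℝ := (M - t) / (M - m) with hμ
  have hμ0 : 0 ≤ μ := div_nonneg (by linarith) hk.le
  have hμ1 : μ ≤ 1 := by
    rw [div_le_one hk]; linarith
  have habs : |m - M| = M - m := by rw [abs_sub_comm, abs_of_pos hk]
  have hmul1 : μ * (M - m) = M - t := by rw [hμ]; field_simp
  have hmul2 : (1 - μ) * (M - m) = t - m := by rw [hμ]; field_simp; ring
  have hM0 : (0:ℝ) ≤ M := by linarith
  have J1 := sq_jensen f hf hm hM0 (by linarith : (0:ℝ) ≤ 1 - μ) (by linarith : (1:ℝ) - μ ≤ 1)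
  have J2 := sq_jensen f hf hm hM0 hμ0 hμ1
  rw [habs] at J1 J2
  rw [show (1 - (1-μ)) = μ by ring, hmul1, hmul2] at J1
  rw [show (1-μ)*m + μ*M = m + M - t by rw [hμ]; field_simp; ring] at J1
  rw [hmul1, hmul2] at J2
  rw [show μ*m + (1-μ)*M = t by rw [hμ]; field_simp; ring] at J2
  have h1μ : (t - m) / (M - m) = 1 - μ := by
    rw [div_eq_iff hk.ne']; exact hmul2.symm
  rw [h1μ]
  linarith

lemma int_abs_sym (f : ℝ → ℝ) (hf : Continuous f) {a : ℝ} (ha : 0 ≤ a) :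
    (∫ s in (-a)..a, f |s|) = 2 * ∫ s in (0:ℝ)..a, f s := by
  have hc : Continuous fun s : ℝ => f |s| := hf.comp continuous_abs
  have h1 : (∫ s in (-a)..(0:ℝ), f |s|) = ∫ s in (0:ℝ)..a, f |s| := by
    have h := intervalIntegral.integral_comp_neg (a := (0:ℝ)) (b := a) fun s => f |s|
    simp only [abs_neg, neg_zero] at h
    exact h.symm
  have h2 : (∫ s in (0:ℝ)..a, f |s|) = ∫ s in (0:ℝ)..a, f s := by
    apply intervalIntegral.integral_congr
    intro s hs
    rw [Set.uIcc_of_le ha] at hs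
    simp [abs_of_nonneg hs.1]
  rw [← intervalIntegral.integral_add_adjacent_intervals
    (hc.intervalIntegrable (-a) 0) (hc.intervalIntegrable 0 a), h1, h2]
  ring

lemma left_sub (f : ℝ → ℝ) (hf : Continuous f) {x y : ℝ} (hxy : x < y) :
    (∫ u in x..y, f |(x + y)/2 - u|) = 2 * (y - x) * ∫ u in (0:ℝ)..(1/2), f (u * (y - x)) := by
  have hk : (0:ℝ) < y - x := by linarith
  have h1 : (∫ u in x..y, f |(x + y)/2 - u|)
      = ∫ s in (-((y-x)/2))..((y-x)/2), f |s| := by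
    rw [intervalIntegral.integral_comp_sub_left (fun s => f |s|) ((x+y)/2)]
    ring_nf
  rw [h1, int_abs_sym f hf (by linarith : (0:ℝ) ≤ (y-x)/2),
    intervalIntegral.integral_comp_mul_right f hk.ne']
  simp
  field_simp

lemma core_sub (f : ℝ → ℝ) {k : ℝ} (hk : 0 < k) :
    (∫ s in (0:ℝ)..k, (1 - s/k) * f s) = k * ∫ u in (0:ℝ)..1, (1-u) * f (u*k) := by
  have h := intervalIntegral.integral_comp_mul_right
    (a := (0:ℝ)) (b := 1) (fun s => (1 - s/k) * f s) hk.ne'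
  simp only [zero_mul, one_mul, smul_eq_mul] at h
  have h2 : (∫ u in (0:ℝ)..1, (1 - u*k/k) * f (u*k))
      = ∫ u in (0:ℝ)..1, (1-u) * f (u*k) := by
    apply intervalIntegral.integral_congr
    intro u _
    show (1 - u*k/k) * f (u*k) = (1-u) * f (u*k)
    rw [mul_div_assoc, div_self hk.ne', mul_one]
  rw [h2] at h
  rw [h]
  field_simp

lemma right_sub1 (f : ℝ → ℝ) {x y : ℝ} (hxy : x < y) :
    (∫ u in x..y, (y-u)/(y-x) * f (u-x))
      = (y-x) * ∫ u in (0:ℝ)..1, (1-u) * f (u*(y-x)) := by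
  have hk : (0:ℝ) < y - x := by linarith
  set g : ℝ → ℝ := fun s => (1 - s/(y-x)) * f s with hg
  have e0 : (∫ u in x..y, (y-u)/(y-x) * f (u-x)) = ∫ u in x..y, g (u-x) := by
    apply intervalIntegral.integral_congr
    intro u _
    rw [hg]
    show (y-u)/(y-x) * f (u-x) = (1 - (u-x)/(y-x)) * f (u-x)
    rw [show (1 - (u-x)/(y-x)) = (y-u)/(y-x) by field_simp; ring]
  have e1 : (∫ u in x..y, g (u-x)) = ∫ s in (x-x)..(y-x), g s :=
    intervalIntegral.integral_comp_sub_right g x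
  rw [e0, e1, sub_self, hg]
  exact core_sub f hk

lemma right_sub2 (f : ℝ → ℝ) {x y : ℝ} (hxy : x < y) :
    (∫ u in x..y, (u-x)/(y-x) * f (y-u))
      = (y-x) * ∫ u in (0:ℝ)..1, (1-u) * f (u*(y-x)) := by
  have hk : (0:ℝ) < y - x := by linarith
  set g : ℝ → ℝ := fun s => (1 - s/(y-x)) * f s with hg
  have e0 : (∫ u in x..y, (u-x)/(y-x) * f (y-u)) = ∫ u in x..y, g (y-u) := by
    apply intervalIntegral.integral_congr
    intro u _
    rw [hg]
    show (u-x)/(y-x) * f (y-u) = (1 - (y-u)/(y-x)) * f (y-u)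
    rw [show (1 - (y-u)/(y-x)) = (u-x)/(y-x) by field_simp; ring]
  have e1 : (∫ u in x..y, g (y-u)) = ∫ s in (y-y)..(y-x), g s :=
    intervalIntegral.integral_comp_sub_left g y
  rw [e0, e1, sub_self, hg]
  exact core_sub f hk

lemma poly1 {x y : ℝ} (hxy : x < y) : (∫ u in x..y, (y-u)/(y-x)) = (y-x)/2 := by
  have hk : (0:ℝ) < y - x := by linarith
  have h : (∫ u in x..y, (y-u)/(y-x))
      = ((∫ u in x..y, (y:ℝ)) - ∫ u in x..y, u)/(y-x) := by
    rw [← intervalIntegral.integral_sub intervalIntegrable_const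
      intervalIntegral.intervalIntegrable_id, ← intervalIntegral.integral_div]
  rw [h, intervalIntegral.integral_const, integral_id]
  field_simp
  ring

lemma poly2 {x y : ℝ} (hxy : x < y) : (∫ u in x..y, (u-x)/(y-x)) = (y-x)/2 := by
  have hk : (0:ℝ) < y - x := by linarith
  have h : (∫ u in x..y, (u-x)/(y-x))
      = ((∫ u in x..y, u) - ∫ u in x..y, (x:ℝ))/(y-x) := by
    rw [← intervalIntegral.integral_sub intervalIntegral.intervalIntegrable_id
      intervalIntegrable_const, ← intervalIntegral.integral_div]
  rw [h, intervalIntegral.integral_const, integral_id]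
  field_simp
  ring

lemma poly3 (C x y : ℝ) : (∫ u in x..y, C * ((x+y)/2 - u)) = 0 := by
  have h : (∫ u in x..y, C * ((x+y)/2 - u))
      = C * ((∫ u in x..y, ((x+y)/2 : ℝ)) - ∫ u in x..y, u) := by
    rw [← intervalIntegral.integral_sub intervalIntegrable_const
      intervalIntegral.intervalIntegrable_id, ← intervalIntegral.integral_const_mul]
  rw [h, intervalIntegral.integral_const, integral_id]
  simp only [smul_eq_mul]
  ring

theorem mercer_hermite_hadamard_superquadratic_first
    (m M : ℝ) (hm : 0 ≤ m) (hmM : m < M)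
    (f : ℝ → ℝ) (hf : Superquadratic f) (hf_cont : Continuous f)
    (β : ℝ → ℝ)
    (hβ : ∀ t ∈ Set.Icc m M,
      β t = (t - m) / (M - m) * f (M - t) + (M - t) / (M - m) * f (t - m))
    (x y : ℝ) (hx : x ∈ Set.Icc m M) (hy : y ∈ Set.Icc m M) (hxy : x < y) :
    f (m + M - (x + y) / 2) + 2 * (∫ u in (0 : ℝ)..(1 / 2), f (u * |x - y|)) ≤
        (1 / (y - x)) * (∫ u in x..y, f (m + M - u)) ∧
      (1 / (y - x)) * (∫ u in x..y, f (m + M - u)) ≤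
        f m + f M - (f x + f y) / 2 - (β x + β y) -
          2 * (∫ u in (0 : ℝ)..1, (1 - u) * f (u * |x - y|)) := by
  obtain ⟨hx1, hx2⟩ := hx
  obtain ⟨hy1, hy2⟩ := hy
  have hk : (0:ℝ) < y - x := by linarith
  have habs : |x - y| = y - x := by rw [abs_sub_comm, abs_of_pos hk]
  have hcont0 : Continuous fun u : ℝ => f (m + M - u) :=
    hf_cont.comp (continuous_const.sub continuous_id)
  have hint0 : IntervalIntegrable (fun u : ℝ => f (m + M - u)) volume x y :=
    hcont0.intervalIntegrable x y
  constructor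
  · -- left inequality
    have hc0 : (0:ℝ) ≤ m + M - (x + y) / 2 := by linarith
    obtain ⟨C, hC⟩ := hf _ hc0
    have hptwise : ∀ u ∈ Set.Icc x y,
        f (m + M - (x + y) / 2) + C * ((x + y) / 2 - u) + f |(x + y) / 2 - u|
          ≤ f (m + M - u) := by
      intro u hu
      have h := hC (m + M - u) (by linarith [hu.2])
      have e : m + M - u - (m + M - (x + y) / 2) = (x + y) / 2 - u := by ring
      rw [e] at h
      linarith [h]
    have hcabs : Continuous fun u : ℝ => f |(x + y) / 2 - u| :=
      hf_cont.comp (continuous_abs.comp (continuous_const.sub continuous_id))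
    have hclin : Continuous fun u : ℝ => C * ((x + y) / 2 - u) :=
      continuous_const.mul (continuous_const.sub continuous_id)
    have hcont1 : Continuous fun u : ℝ =>
        f (m + M - (x + y) / 2) + C * ((x + y) / 2 - u) + f |(x + y) / 2 - u| :=
      (continuous_const.add hclin).add hcabs
    have hmono := intervalIntegral.integral_mono_on hxy.le
      (hcont1.intervalIntegrable x y) hint0 hptwise
    have hsplit : (∫ u in x..y,
        (f (m + M - (x + y) / 2) + C * ((x + y) / 2 - u) + f |(x + y) / 2 - u|))
        = (y - x) * f (m + M - (x + y) / 2)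
          + 2 * (y - x) * ∫ u in (0:ℝ)..(1/2), f (u * (y - x)) := by
      have i1 : IntervalIntegrable (fun u : ℝ =>
          f (m + M - (x + y) / 2) + C * ((x + y) / 2 - u)) volume x y :=
        (continuous_const.add hclin).intervalIntegrable x y
      have i2 : IntervalIntegrable (fun u : ℝ => f |(x + y) / 2 - u|) volume x y :=
        hcabs.intervalIntegrable x y
      have i3 : IntervalIntegrable (fun u : ℝ => C * ((x + y) / 2 - u)) volume x y :=
        hclin.intervalIntegrable x y
      rw [intervalIntegral.integral_add i1 i2,
        intervalIntegral.integral_add intervalIntegrable_const i3,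
        intervalIntegral.integral_const, poly3, left_sub f hf_cont hxy]
      simp only [smul_eq_mul]
      ring
    rw [hsplit] at hmono
    rw [habs]
    have hdiv : ((y - x) * f (m + M - (x + y) / 2)
          + 2 * (y - x) * ∫ u in (0:ℝ)..(1/2), f (u * (y - x))) / (y - x)
        ≤ (∫ u in x..y, f (m + M - u)) / (y - x) := by gcongr
    have e1 : ((y - x) * f (m + M - (x + y) / 2)
          + 2 * (y - x) * ∫ u in (0:ℝ)..(1/2), f (u * (y - x))) / (y - x)
        = f (m + M - (x + y) / 2) + 2 * ∫ u in (0:ℝ)..(1/2), f (u * (y - x)) := by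
      field_simp
    have e2 : (1 / (y - x)) * (∫ u in x..y, f (m + M - u))
        = (∫ u in x..y, f (m + M - u)) / (y - x) := by ring
    linarith
  · -- right inequality
    set Kx := f m + f M - f x - 2 * β x with hKxdef
    set Ky := f m + f M - f y - 2 * β y with hKydef
    have hKx : f (m + M - x) ≤ Kx := by
      have h := mercer_pt f hf hm hmM ⟨hx1, hx2⟩
      rw [hKxdef, hβ x ⟨hx1, hx2⟩]
      linarith
    have hKy : f (m + M - y) ≤ Ky := by
      have h := mercer_pt f hf hm hmM ⟨hy1, hy2⟩
      rw [hKydef, hβ y ⟨hy1, hy2⟩]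
      linarith
    have hMx : (0:ℝ) ≤ m + M - x := by linarith
    have hMy : (0:ℝ) ≤ m + M - y := by linarith
    have hptwise : ∀ u ∈ Set.Icc x y,
        f (m + M - u) ≤ (y-u)/(y-x) * Kx + (u-x)/(y-x) * Ky
          - (y-u)/(y-x) * f (u-x) - (u-x)/(y-x) * f (y-u) := by
      intro u hu
      obtain ⟨hu1, hu2⟩ := hu
      have hl0 : 0 ≤ (y-u)/(y-x) := div_nonneg (by linarith) hk.le
      have hl0' : 0 ≤ (u-x)/(y-x) := div_nonneg (by linarith) hk.le
      have hl1 : (y-u)/(y-x) ≤ 1 := by rw [div_le_one hk]; linarith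
      have J := sq_jensen f hf hMx hMy hl0 hl1
      have e3 : 1 - (y-u)/(y-x) = (u-x)/(y-x) := by field_simp; ring
      rw [show (y-u)/(y-x)*(m+M-x) + (1-(y-u)/(y-x))*(m+M-y) = m + M - u by
          field_simp; ring,
        show |(m+M-x) - (m+M-y)| = y - x by
          rw [show (m+M-x)-(m+M-y) = y-x by ring, abs_of_pos hk],
        e3,
        show (u-x)/(y-x)*(y-x) = u - x by field_simp,
        show (y-u)/(y-x)*(y-x) = y - u by field_simp] at J
      have b1 := mul_le_mul_of_nonneg_left hKx hl0
      have b2 := mul_le_mul_of_nonneg_left hKy hl0'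
      linarith
    have hcf1 : Continuous fun u : ℝ => f (u - x) :=
      hf_cont.comp (continuous_id.sub continuous_const)
    have hcf2 : Continuous fun u : ℝ => f (y - u) :=
      hf_cont.comp (continuous_const.sub continuous_id)
    have hcl : Continuous fun u : ℝ => (y-u)/(y-x) :=
      (continuous_const.sub continuous_id).div_const _
    have hcl' : Continuous fun u : ℝ => (u-x)/(y-x) :=
      (continuous_id.sub continuous_const).div_const _
    have hcB : Continuous fun u : ℝ => (y-u)/(y-x) * Kx + (u-x)/(y-x) * Ky
        - (y-u)/(y-x) * f (u-x) - (u-x)/(y-x) * f (y-u) :=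
      (((hcl.mul continuous_const).add (hcl'.mul continuous_const)).sub
        (hcl.mul hcf1)).sub (hcl'.mul hcf2)
    have hmono := intervalIntegral.integral_mono_on hxy.le hint0
      (hcB.intervalIntegrable x y) hptwise
    have hsplit : (∫ u in x..y, ((y-u)/(y-x) * Kx + (u-x)/(y-x) * Ky
          - (y-u)/(y-x) * f (u-x) - (u-x)/(y-x) * f (y-u)))
        = (y-x)/2 * Kx + (y-x)/2 * Ky
          - (y-x) * (∫ u in (0:ℝ)..1, (1-u) * f (u*(y-x)))
          - (y-x) * (∫ u in (0:ℝ)..1, (1-u) * f (u*(y-x))) := by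
      have j1 : IntervalIntegrable (fun u : ℝ => (y-u)/(y-x) * Kx) volume x y :=
        (hcl.mul continuous_const).intervalIntegrable x y
      have j2 : IntervalIntegrable (fun u : ℝ => (u-x)/(y-x) * Ky) volume x y :=
        (hcl'.mul continuous_const).intervalIntegrable x y
      have j3 : IntervalIntegrable (fun u : ℝ => (y-u)/(y-x) * f (u-x)) volume x y :=
        (hcl.mul hcf1).intervalIntegrable x y
      have j4 : IntervalIntegrable (fun u : ℝ => (u-x)/(y-x) * f (y-u)) volume x y :=
        (hcl'.mul hcf2).intervalIntegrable x y
      have j12 : IntervalIntegrable (fun u : ℝ =>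
          (y-u)/(y-x) * Kx + (u-x)/(y-x) * Ky) volume x y :=
        ((hcl.mul continuous_const).add (hcl'.mul continuous_const)).intervalIntegrable x y
      have j123 : IntervalIntegrable (fun u : ℝ =>
          (y-u)/(y-x) * Kx + (u-x)/(y-x) * Ky - (y-u)/(y-x) * f (u-x)) volume x y :=
        (((hcl.mul continuous_const).add (hcl'.mul continuous_const)).sub
          (hcl.mul hcf1)).intervalIntegrable x y
      rw [intervalIntegral.integral_sub j123 j4,
        intervalIntegral.integral_sub j12 j3,
        intervalIntegral.integral_add j1 j2,
        intervalIntegral.integral_mul_const, intervalIntegral.integral_mul_const,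
        poly1 hxy, poly2 hxy, right_sub1 f hxy, right_sub2 f hxy]
    rw [hsplit] at hmono
    rw [habs]
    have hdiv : (∫ u in x..y, f (m + M - u)) / (y - x)
        ≤ ((y-x)/2 * Kx + (y-x)/2 * Ky
          - (y-x) * (∫ u in (0:ℝ)..1, (1-u) * f (u*(y-x)))
          - (y-x) * (∫ u in (0:ℝ)..1, (1-u) * f (u*(y-x)))) / (y - x) := by gcongr
    have e1 : ((y-x)/2 * Kx + (y-x)/2 * Ky
          - (y-x) * (∫ u in (0:ℝ)..1, (1-u) * f (u*(y-x)))
          - (y-x) * (∫ u in (0:ℝ)..1, (1-u) * f (u*(y-x)))) / (y - x)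
        = Kx/2 + Ky/2 - 2 * (∫ u in (0:ℝ)..1, (1-u) * f (u*(y-x))) := by
      field_simp
      ring
    have e2 : (1 / (y - x)) * (∫ u in x..y, f (m + M - u))
        = (∫ u in x..y, f (m + M - u)) / (y - x) := by ring
    rw [hKxdef, hKydef] at e1
    linarith
end

section
/- Let p ≥ 2 be real, let 0 < m < M, and define β_p(t) = ((M−t)(t−m)/(M−m))·((M−t)^{p−1} + (t−m)^{p−1}). Let H be a complex Hilbert space and let A, D be positive bounded operators on H satisfying A ≤ m·I ≤ (A+D)/2 ≤ M·I ≤ D. Then ((A+D)/2)^p + β_p((A+D)/2) ≤ (A^p + D^p)/2 − ((m·I − A)^p + (D − M·I)^p)/2, where all operator powers and β_p of an operator are formed via continuous functional calculus. -/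
open scoped NNReal

private lemma superadd_rpow {q a b : ℝ} (hq : 1 ≤ q) (ha : 0 ≤ a) (hb : 0 ≤ b) :
    a ^ q + b ^ q ≤ (a + b) ^ q := by
  lift a to ℝ≥0 using ha
  lift b to ℝ≥0 using hb
  exact_mod_cast NNReal.add_rpow_le_rpow_add a b hq

/-- The superquadratic (tangent-line with remainder) inequality for `t ^ p`, `p ≥ 2`. -/
private lemma tangent_rpow {p : ℝ} (hp : 2 ≤ p) {x y : ℝ} (hx : 0 ≤ x) (hy : 0 ≤ y) :
    x ^ p + p * x ^ (p - 1) * (y - x) + |y - x| ^ p ≤ y ^ p := by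
  have hp1 : (1 : ℝ) ≤ p := by linarith
  have hq1 : (1 : ℝ) ≤ p - 1 := by linarith
  have hp0 : p ≠ 0 := by linarith
  rcases le_total x y with hxy | hxy
  · -- case x ≤ y
    rw [abs_of_nonneg (by linarith)]
    have hder : ∀ t : ℝ, HasDerivAt
        (fun t : ℝ => t ^ p - (t - x) ^ p - p * x ^ (p - 1) * t)
        (p * t ^ (p - 1) - p * (t - x) ^ (p - 1) * 1 - p * x ^ (p - 1) * 1) t := by
      intro t
      have h1 : HasDerivAt (fun t : ℝ => t ^ p) (p * t ^ (p - 1)) t :=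
        Real.hasDerivAt_rpow_const (Or.inr hp1)
      have h2 : HasDerivAt (fun t : ℝ => (t - x) ^ p) (p * (t - x) ^ (p - 1) * 1) t := by
        have := (Real.hasDerivAt_rpow_const (x := t - x) (p := p) (Or.inr hp1)).comp t
          ((hasDerivAt_id t).sub_const x)
        simpa [Function.comp_def] using this
      have h3 : HasDerivAt (fun t : ℝ => p * x ^ (p - 1) * t) (p * x ^ (p - 1) * 1) t :=
        (hasDerivAt_id t).const_mul _
      exact (h1.sub h2).sub h3
    have hmono : MonotoneOn (fun t : ℝ => t ^ p - (t - x) ^ p - p * x ^ (p - 1) * t)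
        (Set.Ici x) := by
      apply monotoneOn_of_deriv_nonneg (convex_Ici x)
      · exact fun t _ => (hder t).differentiableAt.continuousAt.continuousWithinAt
      · exact fun t _ => (hder t).differentiableAt.differentiableWithinAt
      · intro t ht
        rw [interior_Ici] at ht
        rw [(hder t).deriv]
        have htx : x ≤ t := le_of_lt ht
        have hsub : (t - x) ^ (p - 1) + x ^ (p - 1) ≤ t ^ (p - 1) := by
          have := superadd_rpow hq1 (by linarith : (0 : ℝ) ≤ t - x) hx
          rwa [sub_add_cancel] at this
        have hpp : (0 : ℝ) ≤ p := by linarith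
        nlinarith [mul_le_mul_of_nonneg_left hsub hpp]
    have hkey := hmono (Set.self_mem_Ici) (Set.mem_Ici.2 hxy) hxy
    simp only [sub_self, Real.zero_rpow hp0] at hkey
    nlinarith [hkey]
  · -- case y ≤ x
    rw [abs_of_nonpos (by linarith), neg_sub]
    have hder : ∀ t : ℝ, HasDerivAt
        (fun t : ℝ => t ^ p + p * x ^ (p - 1) * (x - t) - (x - t) ^ p)
        (p * t ^ (p - 1) + p * x ^ (p - 1) * (-1) - p * (x - t) ^ (p - 1) * (-1)) t := by
      intro t
      have h1 : HasDerivAt (fun t : ℝ => t ^ p) (p * t ^ (p - 1)) t :=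
        Real.hasDerivAt_rpow_const (Or.inr hp1)
      have h2 : HasDerivAt (fun t : ℝ => (x - t) ^ p) (p * (x - t) ^ (p - 1) * (-1)) t := by
        have := (Real.hasDerivAt_rpow_const (x := x - t) (p := p) (Or.inr hp1)).comp t
          ((hasDerivAt_id t).const_sub x)
        simpa [Function.comp_def] using this
      have h3 : HasDerivAt (fun t : ℝ => p * x ^ (p - 1) * (x - t)) (p * x ^ (p - 1) * (-1)) t :=
        ((hasDerivAt_id t).const_sub x).const_mul _
      exact (h1.add h3).sub h2
    have hanti : AntitoneOn (fun t : ℝ => t ^ p + p * x ^ (p - 1) * (x - t) - (x - t) ^ p)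
        (Set.Icc 0 x) := by
      apply antitoneOn_of_deriv_nonpos (convex_Icc 0 x)
      · exact fun t _ => (hder t).differentiableAt.continuousAt.continuousWithinAt
      · exact fun t _ => (hder t).differentiableAt.differentiableWithinAt
      · intro t ht
        rw [interior_Icc] at ht
        rw [(hder t).deriv]
        have hsub : t ^ (p - 1) + (x - t) ^ (p - 1) ≤ x ^ (p - 1) := by
          have := superadd_rpow hq1 (le_of_lt ht.1) (by linarith [ht.2] : (0 : ℝ) ≤ x - t)
          rwa [add_sub_cancel] at this
        have hpp : (0 : ℝ) ≤ p := by linarith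
        nlinarith [mul_le_mul_of_nonneg_left hsub hpp]
    have hkey := hanti (Set.mem_Icc.2 ⟨hy, hxy⟩) (Set.mem_Icc.2 ⟨hx, le_rfl⟩) hxy
    simp only [sub_self, Real.zero_rpow hp0] at hkey
    nlinarith [hkey]

private lemma half_smul_nonneg
    {H : Type*} [NormedAddCommGroup H] [InnerProductSpace ℂ H] [CompleteSpace H]
    {Z : H →L[ℂ] H} (hZ : 0 ≤ Z) : 0 ≤ (2 : ℝ)⁻¹ • Z := by
  have hsa : IsSelfAdjoint Z := .of_nonneg hZ
  rw [← cfc_const_mul_id ((2 : ℝ)⁻¹) Z hsa]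
  exact cfc_nonneg fun x hx => by
    have := spectrum_nonneg_of_nonneg hZ hx
    positivity

set_option maxHeartbeats 2000000 in
theorem jensen_operator_rpow
    {H : Type*} [NormedAddCommGroup H] [InnerProductSpace ℂ H] [CompleteSpace H]
    (p : ℝ) (hp : 2 ≤ p)
    (m M : ℝ) (hm : 0 < m) (hmM : m < M)
    (βp : ℝ → ℝ)
    (hβp : ∀ t : ℝ,
      βp t = (M - t) * (t - m) / (M - m) * ((M - t) ^ (p - 1) + (t - m) ^ (p - 1)))
    (A D : H →L[ℂ] H) (hA : 0 ≤ A) (hD : 0 ≤ D)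
    (hAmI : A ≤ m • 1) (hmid1 : m • (1 : H →L[ℂ] H) ≤ (2 : ℝ)⁻¹ • (A + D))
    (hmid2 : (2 : ℝ)⁻¹ • (A + D) ≤ M • (1 : H →L[ℂ] H)) (hMID : M • (1 : H →L[ℂ] H) ≤ D) :
    cfc (fun t : ℝ => t ^ p) ((2 : ℝ)⁻¹ • (A + D)) + cfc βp ((2 : ℝ)⁻¹ • (A + D)) ≤
      (2 : ℝ)⁻¹ • (cfc (fun t : ℝ => t ^ p) A + cfc (fun t : ℝ => t ^ p) D) -
        (2 : ℝ)⁻¹ • (cfc (fun t : ℝ => t ^ p) (m • 1 - A) +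
          cfc (fun t : ℝ => t ^ p) (D - M • 1)) := by
  have hp1 : (1 : ℝ) ≤ p := by linarith
  have hp0 : p ≠ 0 := by linarith
  have hq0 : p - 1 ≠ 0 := by linarith
  have hMm : (0 : ℝ) < M - m := by linarith
  -- self-adjointness
  have hAsa : IsSelfAdjoint A := .of_nonneg hA
  have hDsa : IsSelfAdjoint D := .of_nonneg hD
  set C : H →L[ℂ] H := (2 : ℝ)⁻¹ • (A + D) with hCdef
  have hCsa : IsSelfAdjoint C := by
    rw [hCdef, IsSelfAdjoint, star_smul, star_trivial, star_add, hAsa.star_eq, hDsa.star_eq]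
  -- continuity facts
  have hcp : Continuous (fun t : ℝ => t ^ p) := Real.continuous_rpow_const (by linarith)
  have hcq : Continuous (fun t : ℝ => t ^ (p - 1)) := Real.continuous_rpow_const (by linarith)
  have hcβ : Continuous βp := by
    have h : Continuous fun t : ℝ =>
        (M - t) * (t - m) / (M - m) * ((M - t) ^ (p - 1) + (t - m) ^ (p - 1)) := by
      apply Continuous.mul
      · fun_prop
      · exact (hcq.comp (by fun_prop)).add (hcq.comp (by fun_prop))
    exact (funext hβp : βp = _) ▸ h
  have hcmp : Continuous (fun t : ℝ => (m - t) ^ p) := hcp.comp (by fun_prop)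
  have hcMp : Continuous (fun t : ℝ => (t - M) ^ p) := hcp.comp (by fun_prop)
  -- rpow splitting helper
  have hxp : ∀ a : ℝ, 0 ≤ a → a * a ^ (p - 1) = a ^ p := by
    intro a ha
    rcases ha.eq_or_lt with h | h
    · rw [← h, Real.zero_rpow hp0, Real.zero_rpow hq0, mul_zero]
    · have h2 : a ^ ((1 : ℝ) + (p - 1)) = a ^ (1 : ℝ) * a ^ (p - 1) := Real.rpow_add h 1 (p - 1)
      rw [Real.rpow_one] at h2
      rw [← h2, show (1 : ℝ) + (p - 1) = p by ring]
  -- the chord slope and intercept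
  set α : ℝ := (M ^ p - m ^ p) / (M - m) with hα
  set c : ℝ := m ^ p - α * m with hc
  have hαMm : α * (M - m) = M ^ p - m ^ p := by
    rw [hα]; field_simp
  have hαm : p * m ^ (p - 1) ≤ α := by
    have h := tangent_rpow hp hm.le (le_trans hm.le (le_of_lt hmM))
    rw [abs_of_pos hMm] at h
    have h2 : (0 : ℝ) ≤ (M - m) ^ p := Real.rpow_nonneg (by linarith) p
    nlinarith [hαMm]
  have hαM : α ≤ p * M ^ (p - 1) := by
    have h := tangent_rpow hp (le_trans hm.le (le_of_lt hmM)) hm.le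
    rw [show |m - M| = M - m by rw [abs_of_nonpos (by linarith)]; ring] at h
    have h2 : (0 : ℝ) ≤ (M - m) ^ p := Real.rpow_nonneg (by linarith) p
    nlinarith [hαMm]
  -- spectra
  have hspecA : ∀ x ∈ spectrum ℝ A, 0 ≤ x ∧ x ≤ m := by
    intro x hx
    refine ⟨spectrum_nonneg_of_nonneg hA hx, ?_⟩
    have hle : A ≤ algebraMap ℝ (H →L[ℂ] H) m := by
      rwa [Algebra.algebraMap_eq_smul_one]
    exact (le_algebraMap_iff_spectrum_le (a := A) hAsa).mp hle x hx
  have hspecD : ∀ x ∈ spectrum ℝ D, M ≤ x := by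
    intro x hx
    have hle : algebraMap ℝ (H →L[ℂ] H) M ≤ D := by
      rwa [Algebra.algebraMap_eq_smul_one]
    exact (algebraMap_le_iff_le_spectrum (a := D) hDsa).mp hle x hx
  have hspecC : ∀ x ∈ spectrum ℝ C, m ≤ x ∧ x ≤ M := by
    intro x hx
    constructor
    · have hle : algebraMap ℝ (H →L[ℂ] H) m ≤ C := by
        rwa [Algebra.algebraMap_eq_smul_one]
      exact (algebraMap_le_iff_le_spectrum (a := C) hCsa).mp hle x hx
    · have hle : C ≤ algebraMap ℝ (H →L[ℂ] H) M := by
        rwa [Algebra.algebraMap_eq_smul_one]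
      exact (le_algebraMap_iff_spectrum_le (a := C) hCsa).mp hle x hx
  -- scalar inequality on spectrum of C
  have scalar1 : ∀ t ∈ spectrum ℝ C, t ^ p + βp t ≤ α * t + c := by
    intro t ht
    obtain ⟨htm, htM⟩ := hspecC t ht
    have ht0 : (0 : ℝ) ≤ t := le_trans hm.le htm
    have h1 := tangent_rpow hp ht0 hm.le
    rw [show |m - t| = t - m by rw [abs_of_nonpos (by linarith)]; ring] at h1
    have h2 := tangent_rpow hp ht0 (le_trans hm.le (le_of_lt hmM))
    rw [abs_of_nonneg (by linarith)] at h2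
    have hu : (0 : ℝ) ≤ t - m := by linarith
    have hv : (0 : ℝ) ≤ M - t := by linarith
    have e1 := mul_le_mul_of_nonneg_left h1 hv
    have e2 := mul_le_mul_of_nonneg_left h2 hu
    have hup : (t - m) * (t - m) ^ (p - 1) = (t - m) ^ p := hxp _ hu
    have hvp : (M - t) * (M - t) ^ (p - 1) = (M - t) ^ p := hxp _ hv
    have hαc : (α * t + c) * (M - m) = (M - t) * m ^ p + (t - m) * M ^ p := by
      rw [hc]; nlinarith [hαMm]
    have hβ' : βp t * (M - m) =
        (M - t) * ((t - m) * (t - m) ^ (p - 1)) + (t - m) * ((M - t) * (M - t) ^ (p - 1)) := by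
      rw [hβp t]; field_simp; ring
    rw [← mul_le_mul_iff_of_pos_right hMm]
    nlinarith [e1, e2, hαc, hβ', hup, hvp]
  -- scalar inequality on spectrum of A
  have scalar2 : ∀ t ∈ spectrum ℝ A, α * t + c ≤ t ^ p - (m - t) ^ p := by
    intro t ht
    obtain ⟨ht0, htm⟩ := hspecA t ht
    have h := tangent_rpow hp hm.le ht0
    rw [show |t - m| = m - t by rw [abs_of_nonpos (by linarith)]; ring] at h
    have hmul : (0 : ℝ) ≤ (α - p * m ^ (p - 1)) * (m - t) :=
      mul_nonneg (by linarith) (by linarith)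
    rw [hc]
    nlinarith [h, hmul]
  -- scalar inequality on spectrum of D
  have scalar3 : ∀ t ∈ spectrum ℝ D, α * t + c ≤ t ^ p - (t - M) ^ p := by
    intro t ht
    have htM := hspecD t ht
    have h := tangent_rpow hp (le_trans hm.le (le_of_lt hmM)) (by linarith : (0 : ℝ) ≤ t)
    rw [abs_of_nonneg (by linarith)] at h
    have hmul : (0 : ℝ) ≤ (p * M ^ (p - 1) - α) * (t - M) :=
      mul_nonneg (by linarith) (by linarith)
    rw [hc]
    nlinarith [h, hmul, hαMm]
  -- cfc of the affine function
  have haffine : ∀ (T : H →L[ℂ] H), IsSelfAdjoint T →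
      cfc (fun t : ℝ => α * t + c) T = α • T + c • (1 : H →L[ℂ] H) := by
    intro T hT
    rw [cfc_add T (fun t => α * t) (fun _ => c) (by fun_prop) (by fun_prop),
      cfc_const_mul_id α T hT, cfc_const c T hT, Algebra.algebraMap_eq_smul_one]
  -- step 1 : the midpoint estimate
  have step1 : cfc (fun t : ℝ => t ^ p) C + cfc βp C ≤ α • C + c • (1 : H →L[ℂ] H) := by
    rw [← cfc_add C _ _ hcp.continuousOn hcβ.continuousOn, ← haffine C hCsa]
    exact cfc_mono scalar1 (hcp.add hcβ).continuousOn (by fun_prop)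
  -- identify cfc power of the shifted operators
  have hQA : cfc (fun t : ℝ => t ^ p) (m • (1 : H →L[ℂ] H) - A)
      = cfc (fun t : ℝ => (m - t) ^ p) A := by
    have h1 : m • (1 : H →L[ℂ] H) - A = cfc (fun t : ℝ => m - t) A := by
      rw [cfc_sub (fun _ : ℝ => m) (fun t : ℝ => t) A (by fun_prop) (by fun_prop),
        cfc_const m A hAsa, cfc_id' ℝ A hAsa, Algebra.algebraMap_eq_smul_one]
    rw [h1, ← cfc_comp' (fun s : ℝ => s ^ p) (fun t : ℝ => m - t) A
      hcp.continuousOn (by fun_prop) hAsa]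
  have hQD : cfc (fun t : ℝ => t ^ p) (D - M • (1 : H →L[ℂ] H))
      = cfc (fun t : ℝ => (t - M) ^ p) D := by
    have h1 : D - M • (1 : H →L[ℂ] H) = cfc (fun t : ℝ => t - M) D := by
      rw [cfc_sub (fun t : ℝ => t) (fun _ : ℝ => M) D (by fun_prop) (by fun_prop),
        cfc_const M D hDsa, cfc_id' ℝ D hDsa, Algebra.algebraMap_eq_smul_one]
    rw [h1, ← cfc_comp' (fun s : ℝ => s ^ p) (fun t : ℝ => t - M) D
      hcp.continuousOn (by fun_prop) hDsa]
  -- step 2 and step 3 : endpoint estimates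
  have step2 : α • A + c • (1 : H →L[ℂ] H) ≤
      cfc (fun t : ℝ => t ^ p) A - cfc (fun t : ℝ => t ^ p) (m • (1 : H →L[ℂ] H) - A) := by
    rw [hQA, ← cfc_sub (fun t : ℝ => t ^ p) (fun t : ℝ => (m - t) ^ p) A
      hcp.continuousOn hcmp.continuousOn, ← haffine A hAsa]
    exact cfc_mono scalar2 (by fun_prop) (hcp.sub hcmp).continuousOn
  have step3 : α • D + c • (1 : H →L[ℂ] H) ≤
      cfc (fun t : ℝ => t ^ p) D - cfc (fun t : ℝ => t ^ p) (D - M • (1 : H →L[ℂ] H)) := by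
    rw [hQD, ← cfc_sub (fun t : ℝ => t ^ p) (fun t : ℝ => (t - M) ^ p) D
      hcp.continuousOn hcMp.continuousOn, ← haffine D hDsa]
    exact cfc_mono scalar3 (by fun_prop) (hcp.sub hcMp).continuousOn
  -- assemble
  set PA := cfc (fun t : ℝ => t ^ p) A with hPA
  set PD := cfc (fun t : ℝ => t ^ p) D with hPD
  set QA := cfc (fun t : ℝ => t ^ p) (m • (1 : H →L[ℂ] H) - A) with hQA'
  set QD := cfc (fun t : ℝ => t ^ p) (D - M • (1 : H →L[ℂ] H)) with hQD'
  have hZ : 0 ≤ ((PA - QA) - (α • A + c • (1 : H →L[ℂ] H)))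
      + ((PD - QD) - (α • D + c • (1 : H →L[ℂ] H))) :=
    add_nonneg (sub_nonneg.2 step2) (sub_nonneg.2 step3)
  have hhalf := half_smul_nonneg hZ
  refine le_trans step1 ?_
  rw [← sub_nonneg]
  have hiden : (2 : ℝ)⁻¹ • (PA + PD) - (2 : ℝ)⁻¹ • (QA + QD)
        - (α • C + c • (1 : H →L[ℂ] H))
      = (2 : ℝ)⁻¹ • (((PA - QA) - (α • A + c • (1 : H →L[ℂ] H)))
        + ((PD - QD) - (α • D + c • (1 : H →L[ℂ] H)))) := by
    rw [hCdef]; module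
  rw [hiden]
  exact hhalf
end
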